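/- arXiv:2501.04554 — 3 statements merged into one kernel-verified Lean document; each statement's English description precedes it below -/
import Mathlib

section
/- Assume in addition that there exist θ₀ > 0 and β > 2 such that P(X > t) ≥ θ₀ t^{−β} for all t ≥ 1. Then for every b ≥ 0 and a > c√b there exist θ₁ > 0 and n₀ ∈ ℕ such that P(T_{a,b} > n) ≥ θ₁ n^{−β/2} for all n ≥ n₀. -/
open MeasureTheory ProbabilityTheory Real Set Filter
open scoped ENNReal NNReal ProbabilityTheory

noncomputable section

/-- Auxiliary recursion defining the functions `ψ_p`. -/
def psiAux : ℕ → ℝ → ℝ → ℝ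
  | 0, p, x => (Real.Gamma (-p))⁻¹ *
      ∫ s in Set.Ioi (0 : ℝ), Real.exp (-x * s - s ^ 2 / 2) * s ^ (-p - 1)
  | (n + 1), p, x =>
      if p < 0 then
        (Real.Gamma (-p))⁻¹ *
          ∫ s in Set.Ioi (0 : ℝ), Real.exp (-x * s - s ^ 2 / 2) * s ^ (-p - 1)
      else x * psiAux n (p - 1) x + (1 - p) * psiAux n (p - 2) x

/-- `ψ_p(x)`: for `p < 0` given by the integral representation
`ψ_p(x) = Γ(-p)⁻¹ ∫₀^∞ exp(-xs - s²/2) s^{-p-1} ds`; for `p ≥ 0` defined by iterating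
the recurrence `ψ_p(x) = x ψ_{p-1}(x) + (1-p) ψ_{p-2}(x)`. -/
def psi (p x : ℝ) : ℝ := psiAux (⌈p⌉₊ + 1) p x

/-- `V_p(x,t) = t^{p/2} ψ_p(x/√t)` for `t > 0`, and `V_p(x,0) = x^p`. -/
def V (p x t : ℝ) : ℝ :=
  if t = 0 then x ^ p else t ^ (p / 2) * psi p (x / Real.sqrt t)

/-- `c(p)`: the largest real zero of `ψ_p`. -/
def cRoot (p : ℝ) : ℝ := sSup {x : ℝ | psi p x = 0}

/-- `p(c)`: the minimal positive root of `p ↦ ψ_p(c)`. -/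
def pRoot (c : ℝ) : ℝ := sInf {p : ℝ | 0 < p ∧ psi p c = 0}

/-- `V̄_p(x,t) = V_p(x,t)` if `x ≥ c(p)√t`, and `0` otherwise. -/
def Vbar (p x t : ℝ) : ℝ := if cRoot p * Real.sqrt t ≤ x then V p x t else 0

variable {Ω : Type*}

/-- The random walk `S(n) = X₁ + ⋯ + Xₙ` (with increments `X 0, X 1, …`). -/
def S (X : ℕ → Ω → ℝ) (n : ℕ) (ω : Ω) : ℝ := ∑ i ∈ Finset.range n, X i ω

/-- The stopping time `T_{a,b} = inf {n ≥ 1 : a + S(n) ≤ c √(n+b)}`, valued in `ℕ∞`. -/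
def hitT (c a b : ℝ) (X : ℕ → Ω → ℝ) (ω : Ω) : ℕ∞ :=
  sInf {m : ℕ∞ | ∃ k : ℕ, m = k ∧ 1 ≤ k ∧ a + S X k ω ≤ c * Real.sqrt ((k : ℝ) + b)}


namespace HeavyAux

variable {Ω : Type*}

/-- The shifted walk using `X 1, X 2, …`. -/
def Wk (X : ℕ → Ω → ℝ) (m : ℕ) (ω : Ω) : ℝ := ∑ j ∈ Finset.range m, X (j + 1) ω

lemma indep_mono_right {m0 : MeasurableSpace Ω} {μ : Measure Ω} {m₁ m₂ m₂' : MeasurableSpace Ω}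
    (h : Indep m₁ m₂ μ) (h' : m₂' ≤ m₂) : Indep m₁ m₂' μ := by
  rw [Indep_iff] at h ⊢
  exact fun t1 t2 h1 h2 => h t1 t2 h1 (h' _ h2)

variable [MeasureSpace Ω] [IsProbabilityMeasure (ℙ : Measure Ω)]
  {X : ℕ → Ω → ℝ}

section walk

lemma measurable_Wk (hmeas : ∀ i, Measurable (X i)) (m : ℕ) : Measurable (Wk X m) :=
  Finset.measurable_sum _ fun j _ => hmeas (j + 1)

lemma Wk_eq_sum (m : ℕ) : Wk X m = ∑ j ∈ Finset.range m, X (j + 1) := by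
  ext ω; simp [Wk]

lemma memLp_Wk (hL2 : ∀ i, MemLp (X i) 2 ℙ) (m : ℕ) : MemLp (Wk X m) 2 ℙ := by
  rw [Wk_eq_sum]
  exact memLp_finsetSum' _ fun j _ => hL2 (j + 1)

lemma integrable_Wk (hL2 : ∀ i, MemLp (X i) 2 ℙ) (m : ℕ) : Integrable (Wk X m) ℙ :=
  (memLp_Wk hL2 m).integrable one_le_two

lemma integral_Wk (hL2 : ∀ i, MemLp (X i) 2 ℙ) (hmean : ∀ i, ∫ ω, X i ω ∂ℙ = 0) (m : ℕ) :
    ∫ ω, Wk X m ω ∂ℙ = 0 := by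
  unfold Wk
  rw [integral_finset_sum _ fun j _ => (hL2 (j + 1)).integrable one_le_two]
  simp [hmean]

lemma variance_X (hL2 : ∀ i, MemLp (X i) 2 ℙ) (hmean : ∀ i, ∫ ω, X i ω ∂ℙ = 0) (hvar : ∀ i, ∫ ω, X i ω ^ 2 ∂ℙ = 1)
    (i : ℕ) : variance (X i) ℙ = 1 := by
  rw [variance_eq_sub (hL2 i)]
  have h1 : (ℙ : Measure Ω)[X i ^ 2] = 1 := by
    simpa [Pi.pow_apply] using hvar i
  rw [h1, hmean i]
  norm_num

lemma variance_Wk (hL2 : ∀ i, MemLp (X i) 2 ℙ) (hindep : iIndepFun X ℙ)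
    (hmean : ∀ i, ∫ ω, X i ω ∂ℙ = 0) (hvar : ∀ i, ∫ ω, X i ω ^ 2 ∂ℙ = 1) (m : ℕ) :
    variance (Wk X m) ℙ = m := by
  have himg : Wk X m = ∑ k ∈ (Finset.range m).image (· + 1), X k := by
    rw [Wk_eq_sum]
    rw [Finset.sum_image fun x _ y _ h => by omega]
  rw [himg, IndepFun.variance_sum (fun i _ => hL2 i)
    (fun i _ j _ hij => hindep.indepFun hij)]
  rw [Finset.sum_congr rfl fun k _ => variance_X hL2 hmean hvar k, Finset.sum_const,
    Finset.card_image_of_injective _ fun a b h => by omega]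
  simp

lemma integral_sq_Wk (hL2 : ∀ i, MemLp (X i) 2 ℙ) (hindep : iIndepFun X ℙ)
    (hmean : ∀ i, ∫ ω, X i ω ∂ℙ = 0) (hvar : ∀ i, ∫ ω, X i ω ^ 2 ∂ℙ = 1) (m : ℕ) :
    ∫ ω, Wk X m ω ^ 2 ∂ℙ = m := by
  have h := variance_eq_sub (memLp_Wk hL2 m)
  have h2 : (ℙ : Measure Ω)[Wk X m ^ 2] = ∫ ω, Wk X m ω ^ 2 ∂ℙ := by
    simp [Pi.pow_apply]
  have h3 : (ℙ : Measure Ω)[Wk X m] = 0 := integral_Wk hL2 hmean m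
  rw [variance_Wk hL2 hindep hmean hvar m] at h
  rw [h2, h3] at h
  linarith

end walk



namespace M2

/-- Natural filtration of the shifted walk. -/
def filt (X : ℕ → Ω → ℝ) (hmeas : ∀ i, Measurable (X i)) :
    Filtration ℕ (inferInstance : MeasurableSpace Ω) :=
  Filtration.natural (Wk X) fun m => (measurable_Wk hmeas m).stronglyMeasurable

lemma martingale_Wk (hmeas : ∀ i, Measurable (X i)) (hL2 : ∀ i, MemLp (X i) 2 ℙ)
    (hindep : iIndepFun X ℙ)
    (hmean : ∀ i, ∫ ω, X i ω ∂ℙ = 0) :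
    Martingale (Wk X) (filt X hmeas) ℙ := by
  have hadp : StronglyAdapted (filt X hmeas) (Wk X) :=
    Filtration.stronglyAdapted_natural fun m => (measurable_Wk hmeas m).stronglyMeasurable
  refine martingale_nat hadp (fun i => integrable_Wk hL2 i) fun i => ?_
  have hsucc : Wk X (i + 1) = Wk X i + X (i + 1) := by
    ext ω; simp [Wk, Finset.sum_range_succ]
  have hle : filt X hmeas i ≤ (inferInstance : MeasurableSpace Ω) := (filt X hmeas).le i
  have h1 : (ℙ : Measure Ω)[Wk X i | filt X hmeas i] = Wk X i :=
    condExp_of_stronglyMeasurable hle (hadp i) (integrable_Wk hL2 i)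
  have hfilt_le : filt X hmeas i ≤
      ⨆ j ∈ Set.Iic i, MeasurableSpace.comap (X j) inferInstance := by
    show (⨆ k, ⨆ _ : k ≤ i, MeasurableSpace.comap (Wk X k) _) ≤ _
    refine iSup₂_le fun k hk => ?_
    refine measurable_iff_comap_le.mp ?_
    refine Finset.measurable_sum _ fun j hj => ?_
    have hji : j + 1 ∈ Set.Iic i := by
      simp only [Finset.mem_range] at hj
      simp only [Set.mem_Iic]; omega
    exact measurable_iff_comap_le.mpr
      (le_biSup (fun j => MeasurableSpace.comap (X j) inferInstance) hji)
  have hindep' : Indep (MeasurableSpace.comap (X (i + 1)) inferInstance)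
      (filt X hmeas i) ℙ := by
    have h2 : Indep (⨆ j ∈ ({i + 1} : Set ℕ), MeasurableSpace.comap (X j) inferInstance)
        (⨆ j ∈ Set.Iic i, MeasurableSpace.comap (X j) inferInstance) ℙ := by
      refine indep_iSup_of_disjoint (fun j => (hmeas j).comap_le) hindep.iIndep ?_
      simp only [Set.disjoint_singleton_left, Set.mem_Iic]
      omega
    simp only [Set.mem_singleton_iff, iSup_iSup_eq_left] at h2
    exact indep_mono_right h2 hfilt_le
  have hsm₁ : StronglyMeasurable[MeasurableSpace.comap (X (i + 1)) inferInstance] (X (i + 1)) :=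
    Measurable.stronglyMeasurable (measurable_iff_comap_le.mpr le_rfl)
  have hzero := condExp_indep_eq (μ := (ℙ : Measure Ω)) (hmeas (i + 1)).comap_le hle hsm₁ hindep'
  have hadd := condExp_add (μ := (ℙ : Measure Ω)) (m := filt X hmeas i)
    (integrable_Wk hL2 i) ((hL2 (i + 1)).integrable one_le_two)
  rw [hsucc]
  filter_upwards [hadd, hzero] with ω hω₁ hω₂
  rw [hω₁, Pi.add_apply, h1, hω₂, hmean (i + 1), add_zero]

set_option maxHeartbeats 2000000 in
set_option synthInstance.maxHeartbeats 200000 in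
lemma doob_bound (hmeas : ∀ i, Measurable (X i)) (hL2 : ∀ i, MemLp (X i) 2 ℙ)
    (hindep : iIndepFun X ℙ)
    (hmean : ∀ i, ∫ ω, X i ω ∂ℙ = 0) (hvar : ∀ i, ∫ ω, X i ω ^ 2 ∂ℙ = 1)
    (n : ℕ) (hn : 1 ≤ n) {L : ℝ} (hL : 0 < L) :
    (ℙ {ω | ∃ m, m < n ∧ L * Real.sqrt n < |Wk X m ω|}).toReal ≤ 2 / L := by
  have hM := martingale_Wk hmeas hL2 hindep hmean
  have hs : (0 : ℝ) < Real.sqrt n := Real.sqrt_pos.mpr (by exact_mod_cast hn)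
  set n' : ℕ := n - 1 with hn'def
  have hn' : n' + 1 = n := Nat.sub_add_cancel hn
  set ε : ℝ≥0 := ⟨L * Real.sqrt n, by positivity⟩ with hε
  have key : ∀ f : ℕ → Ω → ℝ, Submartingale f (filt X hmeas) ℙ → (0 ≤ f) →
      (∀ ω, f n' ω ≤ |Wk X n' ω|) →
      (ℙ {ω | (ε : ℝ) ≤ (Finset.range (n' + 1)).sup' Finset.nonempty_range_add_one
        fun k => f k ω}).toReal ≤ 1 / L := by
    intro f hf hf0 hfle
    set E : Set Ω := {ω | (ε : ℝ) ≤ (Finset.range (n' + 1)).sup' Finset.nonempty_range_add_one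
      fun k => f k ω} with hE
    have hmax := maximal_ineq hf hf0 (ε := ε) n'
    have hint_f : Integrable (f n') ℙ := hf.integrable n'
    have habs : Integrable (fun ω => |Wk X n' ω|) ℙ := (integrable_Wk hL2 n').abs
    have h₁ : ∫ ω in E, f n' ω ∂ℙ ≤ ∫ ω, f n' ω ∂ℙ :=
      setIntegral_le_integral hint_f (ae_of_all _ fun ω => hf0 n' ω)
    have h₂ : ∫ ω, f n' ω ∂ℙ ≤ ∫ ω, |Wk X n' ω| ∂ℙ :=
      integral_mono hint_f habs hfle
    have hint_sq : Integrable (fun ω => Wk X n' ω ^ 2) ℙ := (memLp_Wk hL2 n').integrable_sq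
    have h₃ : ∫ ω, |Wk X n' ω| ∂ℙ ≤ Real.sqrt n := by
      have hpt : ∀ ω, |Wk X n' ω| ≤ (Real.sqrt n + Wk X n' ω ^ 2 / Real.sqrt n) / 2 := by
        intro ω
        have hts : Wk X n' ω ^ 2 / Real.sqrt n * Real.sqrt n = Wk X n' ω ^ 2 :=
          div_mul_cancel₀ _ hs.ne'
        nlinarith [sq_nonneg (|Wk X n' ω| - Real.sqrt n), sq_abs (Wk X n' ω),
          div_nonneg (sq_nonneg (Wk X n' ω)) hs.le]
      have hint_rhs : Integrable (fun ω => (Real.sqrt n + Wk X n' ω ^ 2 / Real.sqrt n) / 2) ℙ :=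
        (((integrable_const _).add (hint_sq.div_const _)).div_const _)
      calc ∫ ω, |Wk X n' ω| ∂ℙ ≤ ∫ ω, (Real.sqrt n + Wk X n' ω ^ 2 / Real.sqrt n) / 2 ∂ℙ :=
            integral_mono habs hint_rhs hpt
        _ = (Real.sqrt n + (n' : ℝ) / Real.sqrt n) / 2 := by
            rw [integral_div, integral_add (integrable_const _) (hint_sq.div_const _),
              integral_const, integral_div, integral_sq_Wk hL2 hindep hmean hvar]
            simp
        _ ≤ (Real.sqrt n + Real.sqrt n) / 2 := by
            have hn'le : (n' : ℝ) ≤ Real.sqrt n * Real.sqrt n := by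
              rw [Real.mul_self_sqrt (by positivity)]
              exact_mod_cast Nat.sub_le n 1
            have : (n' : ℝ) / Real.sqrt n ≤ Real.sqrt n := by
              rw [div_le_iff₀ hs]; linarith
            linarith
        _ = Real.sqrt n := by ring
    have h4 : (ε : ℝ≥0∞) * ℙ E ≤ ENNReal.ofReal (Real.sqrt n) := by
      refine le_trans ?_ (ENNReal.ofReal_le_ofReal (h₁.trans (h₂.trans h₃)))
      exact hmax
    have h5 : (L * Real.sqrt n) * (ℙ E).toReal ≤ Real.sqrt n := by
      have h6 := ENNReal.toReal_mono ENNReal.ofReal_ne_top h4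
      rw [ENNReal.toReal_mul, ENNReal.coe_toReal,
        ENNReal.toReal_ofReal hs.le] at h6
      exact h6
    rw [le_div_iff₀ hL]
    have h7 : (ℙ E).toReal * L * Real.sqrt n ≤ 1 * Real.sqrt n := by ring_nf; ring_nf at h5; linarith
    have := le_of_mul_le_mul_right h7 hs
    linarith
  set Ep : Set Ω := {ω | (ε : ℝ) ≤ (Finset.range (n' + 1)).sup' Finset.nonempty_range_add_one
    fun k => ((Wk X)⁺) k ω} with hEp
  set Em : Set Ω := {ω | (ε : ℝ) ≤ (Finset.range (n' + 1)).sup' Finset.nonempty_range_add_one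
    fun k => ((-Wk X)⁺) k ω} with hEm
  have hpos : (0 : ℕ → Ω → ℝ) ≤ (Wk X)⁺ := fun k ω => posPart_nonneg _
  have hpos' : (0 : ℕ → Ω → ℝ) ≤ (-Wk X)⁺ := fun k ω => posPart_nonneg _
  have hkeyp : (ℙ Ep).toReal ≤ 1 / L := by
    refine key _ hM.submartingale.pos hpos fun ω => ?_
    calc ((Wk X)⁺) n' ω = (Wk X n' ω)⁺ := rfl
      _ ≤ |Wk X n' ω| := by
          rw [posPart_def]; exact sup_le (le_abs_self _) (abs_nonneg _)
  have hkeym : (ℙ Em).toReal ≤ 1 / L := by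
    refine key _ hM.neg.submartingale.pos hpos' fun ω => ?_
    calc ((-Wk X)⁺) n' ω = (-(Wk X n' ω))⁺ := rfl
      _ ≤ |Wk X n' ω| := by
          rw [← abs_neg, posPart_def]; exact sup_le (le_abs_self _) (abs_nonneg _)
  have hincl : {ω | ∃ m, m < n ∧ L * Real.sqrt n < |Wk X m ω|} ⊆ Ep ∪ Em := by
    rintro ω ⟨m, hm, hmlt⟩
    have hmmem : m ∈ Finset.range (n' + 1) := by rw [Finset.mem_range]; omega
    rcases lt_abs.mp hmlt with h | h
    · left
      refine le_trans (le_of_lt ?_) (Finset.le_sup' (fun k => ((Wk X)⁺) k ω) hmmem)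
      calc (ε : ℝ) = L * Real.sqrt n := rfl
        _ < Wk X m ω := h
        _ ≤ ((Wk X)⁺) m ω := le_posPart _
    · right
      refine le_trans (le_of_lt ?_) (Finset.le_sup' (fun k => ((-Wk X)⁺) k ω) hmmem)
      calc (ε : ℝ) = L * Real.sqrt n := rfl
        _ < -Wk X m ω := h
        _ ≤ ((-Wk X)⁺) m ω := le_posPart _
  calc (ℙ {ω | ∃ m, m < n ∧ L * Real.sqrt n < |Wk X m ω|}).toReal
      ≤ (ℙ (Ep ∪ Em)).toReal :=
        ENNReal.toReal_mono (measure_ne_top _ _) (measure_mono hincl)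
    _ ≤ (ℙ Ep + ℙ Em).toReal := by
        refine ENNReal.toReal_mono ?_ (measure_union_le _ _)
        exact ENNReal.add_ne_top.mpr ⟨measure_ne_top _ _, measure_ne_top _ _⟩
    _ = (ℙ Ep).toReal + (ℙ Em).toReal :=
        ENNReal.toReal_add (measure_ne_top _ _) (measure_ne_top _ _)
    _ ≤ 1 / L + 1 / L := add_le_add hkeyp hkeym
    _ = 2 / L := by ring

end M2


end HeavyAux

/-- Lower bound for walks with heavy right tails: if `P(X > t) ≥ θ₀ t^{-β}` for `t ≥ 1`
with `β > 2`, then `P(T_{a,b} > n) ≥ θ₁ n^{-β/2}` for all large `n`. -/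
theorem tail_lower_bound_heavy_tail
    [MeasureSpace Ω] [IsProbabilityMeasure (ℙ : Measure Ω)]
    (X : ℕ → Ω → ℝ) (c θ₀ β : ℝ) (hθ₀ : 0 < θ₀) (hβ : 2 < β)
    (hmeas : ∀ i, Measurable (X i))
    (hindep : iIndepFun X ℙ)
    (hident : ∀ i, IdentDistrib (X i) (X 0) ℙ ℙ)
    (hmean : ∫ ω, X 0 ω ∂ℙ = 0)
    (hvar : ∫ ω, (X 0 ω) ^ 2 ∂ℙ = 1)
    (htail : ∀ t : ℝ, 1 ≤ t → θ₀ * t ^ (-β) ≤ (ℙ {ω | t < X 0 ω}).toReal) :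
    ∀ b : ℝ, 0 ≤ b → ∀ a : ℝ, c * Real.sqrt b < a →
      ∃ θ₁ : ℝ, 0 < θ₁ ∧ ∃ n₀ : ℕ, ∀ n : ℕ, n₀ ≤ n →
        θ₁ * (n : ℝ) ^ (-β / 2) ≤ (ℙ {ω | (n : ℕ∞) < hitT c a b X ω}).toReal := by
  classical
  intro b hb a ha
  have hInt2 : Integrable (fun ω => X 0 ω ^ 2) ℙ := by
    by_contra h
    rw [integral_undef h] at hvar
    norm_num at hvar
  have hL2_0 : MemLp (X 0) 2 ℙ :=
    (memLp_two_iff_integrable_sq (hmeas 0).aestronglyMeasurable).2 hInt2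
  have hL2 : ∀ i, MemLp (X i) 2 ℙ := fun i => (hident i).symm.memLp_snd hL2_0
  have hmean' : ∀ i, ∫ ω, X i ω ∂ℙ = 0 := fun i => (hident i).integral_eq.trans hmean
  have hvar' : ∀ i, ∫ ω, X i ω ^ 2 ∂ℙ = 1 := by
    intro i
    have h := ((hident i).comp (measurable_id.pow_const 2)).integral_eq
    simp only [Function.comp] at h
    exact h.trans hvar
  set L : ℝ := 8 with hLdef
  set K : ℝ := L + |c| + 1 + |c| * Real.sqrt b + |a| with hKdef
  have habsc : 0 ≤ |c| := abs_nonneg c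
  have hcb : 0 ≤ |c| * Real.sqrt b := mul_nonneg habsc (Real.sqrt_nonneg b)
  have habsa : 0 ≤ |a| := abs_nonneg a
  have hK1 : 1 ≤ K := by rw [hKdef, hLdef]; linarith
  have hK0 : 0 < K := lt_of_lt_of_le one_pos hK1
  refine ⟨θ₀ * K ^ (-β) / 2, by positivity, 1, fun n hn => ?_⟩
  have hn0 : (0:ℝ) < n := by exact_mod_cast hn
  have hsn : 1 ≤ Real.sqrt n := by
    rw [show (1:ℝ) = Real.sqrt 1 by simp]
    exact Real.sqrt_le_sqrt (by exact_mod_cast hn)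
  have hsn0 : 0 < Real.sqrt n := lt_of_lt_of_le one_pos hsn
  set t : ℝ := K * Real.sqrt n with htdef
  have ht1 : 1 ≤ t := by
    rw [htdef]; nlinarith
  set A : Set Ω := {ω | t < X 0 ω} with hA
  set B : Set Ω := {ω | ∀ m, m < n → |HeavyAux.Wk X m ω| ≤ L * Real.sqrt n} with hB
  have hWmeas : ∀ m, Measurable (HeavyAux.Wk X m) := fun m => HeavyAux.measurable_Wk hmeas m
  have hBmeas : MeasurableSet B := by
    have hBi : B = ⋂ m ∈ Finset.range n, {ω | |HeavyAux.Wk X m ω| ≤ L * Real.sqrt n} := by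
      ext ω; simp [hB]
    rw [hBi]
    exact MeasurableSet.biInter (Set.to_countable _) fun m _ =>
      measurableSet_le (hWmeas m).abs measurable_const
  -- the key pathwise inclusion
  have hincl : A ∩ B ⊆ {ω | (n : ℕ∞) < hitT c a b X ω} := by
    rintro ω ⟨hωA, hωB⟩
    have hstep : ∀ k : ℕ, 1 ≤ k → k ≤ n → c * Real.sqrt ((k:ℝ) + b) < a + S X k ω := by
      intro k hk1 hkn
      obtain ⟨k', rfl⟩ : ∃ k', k = k' + 1 := ⟨k - 1, by omega⟩
      have hSk : S X (k' + 1) ω = X 0 ω + HeavyAux.Wk X k' ω := by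
        show (∑ i ∈ Finset.range (k' + 1), X i ω) = _
        rw [Finset.sum_range_succ', add_comm]
        rfl
      have hWb : |HeavyAux.Wk X k' ω| ≤ L * Real.sqrt n := hωB _ (by omega)
      have hsqrtadd : Real.sqrt ((n:ℝ) + b) ≤ Real.sqrt n + Real.sqrt b := by
        have hle : (n:ℝ) + b ≤ (Real.sqrt n + Real.sqrt b) ^ 2 := by
          have hn2 : Real.sqrt n ^ 2 = (n:ℝ) := Real.sq_sqrt hn0.le
          have hb2 : Real.sqrt b ^ 2 = b := Real.sq_sqrt hb
          nlinarith [Real.sqrt_nonneg (n:ℝ), Real.sqrt_nonneg b]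
        have h := Real.sqrt_le_sqrt hle
        rwa [Real.sqrt_sq (by positivity)] at h
      have h1 : c * Real.sqrt (((k' + 1 : ℕ):ℝ) + b) ≤ |c| * (Real.sqrt n + Real.sqrt b) := by
        calc c * Real.sqrt (((k' + 1 : ℕ):ℝ) + b)
            ≤ |c| * Real.sqrt (((k' + 1 : ℕ):ℝ) + b) :=
              mul_le_mul_of_nonneg_right (le_abs_self c) (Real.sqrt_nonneg _)
          _ ≤ |c| * (Real.sqrt n + Real.sqrt b) := by
              refine mul_le_mul_of_nonneg_left ?_ habsc
              refine le_trans (Real.sqrt_le_sqrt ?_) hsqrtadd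
              have : ((k' + 1 : ℕ):ℝ) ≤ (n:ℝ) := by exact_mod_cast hkn
              linarith
      have hX0 : t < X 0 ω := hωA
      have hWlow : -(L * Real.sqrt n) ≤ HeavyAux.Wk X k' ω := neg_le_of_abs_le hWb
      rw [hSk]
      rw [htdef, hKdef, hLdef] at hX0
      rw [hLdef] at hWlow
      have hna : -|a| ≤ a := neg_abs_le a
      have hsb : 0 ≤ Real.sqrt b := Real.sqrt_nonneg b
      nlinarith [mul_nonneg (by linarith : (0:ℝ) ≤ Real.sqrt n - 1) hcb,
        mul_nonneg (by linarith : (0:ℝ) ≤ Real.sqrt n - 1) habsa,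
        mul_nonneg (by linarith : (0:ℝ) ≤ Real.sqrt n - 1) habsc]
    show (n : ℕ∞) < hitT c a b X ω
    have hlb : ((n + 1 : ℕ) : ℕ∞) ≤ hitT c a b X ω := by
      refine le_sInf ?_
      rintro m ⟨k, rfl, hk1, hkle⟩
      have hkn : n < k := by
        by_contra hkn
        push_neg at hkn
        exact absurd hkle (not_le.mpr (hstep k hk1 hkn))
      exact_mod_cast hkn
    refine lt_of_lt_of_le ?_ hlb
    exact_mod_cast Nat.lt_succ_self n
  -- independence of A and B
  have hT0 : (0:ℕ) ∉ Finset.Icc 1 n := by simp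
  have hIF := hindep.indepFun_finset {0} (Finset.Icc 1 n)
    (Finset.disjoint_singleton_left.mpr hT0) hmeas
  have h0mem : (0:ℕ) ∈ ({0} : Finset ℕ) := Finset.mem_singleton_self 0
  have hIF2 : IndepFun (X 0) (fun a (i : (Finset.Icc 1 n : Finset ℕ)) => X (i:ℕ) a) ℙ :=
    hIF.comp (measurable_pi_apply (⟨0, h0mem⟩ : ({0} : Finset ℕ))) measurable_id
  set C : Set ((i : (Finset.Icc 1 n : Finset ℕ)) → ℝ) :=
    {v | ∀ m, m < n → |∑ j ∈ Finset.range m,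
      (if h : (j+1) ∈ Finset.Icc 1 n then v ⟨j+1, h⟩ else 0)| ≤ L * Real.sqrt n} with hC
  have hCmeas : MeasurableSet C := by
    have hCi : C = ⋂ m ∈ Finset.range n, {v : (i : (Finset.Icc 1 n : Finset ℕ)) → ℝ |
        |∑ j ∈ Finset.range m, (if h : (j+1) ∈ Finset.Icc 1 n then v ⟨j+1, h⟩ else 0)|
          ≤ L * Real.sqrt n} := by
      ext v; simp [hC]
    rw [hCi]
    refine MeasurableSet.biInter (Set.to_countable _) fun m _ => ?_
    refine measurableSet_le (Measurable.abs ?_) measurable_const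
    refine Finset.measurable_sum _ fun j _ => ?_
    by_cases h : (j+1) ∈ Finset.Icc 1 n
    · simpa [h] using measurable_pi_apply (⟨j+1, h⟩ : (Finset.Icc 1 n : Finset ℕ))
    · simpa [h] using measurable_const
  have hBpre : B = (fun a (i : (Finset.Icc 1 n : Finset ℕ)) => X (i:ℕ) a) ⁻¹' C := by
    ext ω
    simp only [hB, hC, Set.mem_preimage, Set.mem_setOf_eq]
    refine forall_congr' fun m => imp_congr_right fun hm => ?_
    have hsum : (∑ j ∈ Finset.range m,
        (if h : (j+1) ∈ Finset.Icc 1 n then X (j+1) ω else 0)) = HeavyAux.Wk X m ω := by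
      refine Finset.sum_congr rfl fun j hj => ?_
      rw [Finset.mem_range] at hj
      have hmem : (j+1) ∈ Finset.Icc 1 n := by
        rw [Finset.mem_Icc]; omega
      simp [hmem]
    rw [hsum]
  have hApre : A = X 0 ⁻¹' Set.Ioi t := rfl
  have hmul : ℙ (A ∩ B) = ℙ A * ℙ B := by
    rw [hApre, hBpre]
    exact hIF2.measure_inter_preimage_eq_mul _ _ measurableSet_Ioi hCmeas
  -- bound on P(Bᶜ)
  have hBc : Bᶜ = {ω | ∃ m, m < n ∧ L * Real.sqrt n < |HeavyAux.Wk X m ω|} := by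
    ext ω
    simp [hB, not_forall, not_le]
  have hPBc : (ℙ Bᶜ).toReal ≤ 2 / L := by
    rw [hBc]
    exact HeavyAux.M2.doob_bound hmeas hL2 hindep hmean' hvar' n hn (by rw [hLdef]; norm_num)
  have hPBsum : (ℙ B).toReal + (ℙ Bᶜ).toReal = 1 := by
    rw [← ENNReal.toReal_add (measure_ne_top _ _) (measure_ne_top _ _),
      measure_add_measure_compl hBmeas]
    simp
  have hPB : 1/2 ≤ (ℙ B).toReal := by
    have hLval : 2 / L = 1/4 := by rw [hLdef]; norm_num
    rw [hLval] at hPBc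
    linarith
  have hPA : θ₀ * t ^ (-β) ≤ (ℙ A).toReal := htail t ht1
  have ht0 : 0 < t := lt_of_lt_of_le one_pos ht1
  have hPA0 : 0 ≤ θ₀ * t ^ (-β) := by positivity
  have hfin : (ℙ (A ∩ B)).toReal ≤ (ℙ {ω | (n:ℕ∞) < hitT c a b X ω}).toReal :=
    ENNReal.toReal_mono (measure_ne_top _ _) (measure_mono hincl)
  have hABval : (ℙ (A ∩ B)).toReal = (ℙ A).toReal * (ℙ B).toReal := by
    rw [hmul, ENNReal.toReal_mul]
  have hrpow : t ^ (-β) = K ^ (-β) * (n:ℝ) ^ (-β/2) := by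
    rw [htdef, Real.mul_rpow hK0.le (Real.sqrt_nonneg _)]
    congr 1
    rw [Real.sqrt_eq_rpow, ← Real.rpow_mul hn0.le]
    congr 1
    ring
  calc θ₀ * K ^ (-β) / 2 * (n:ℝ) ^ (-β/2) = (θ₀ * t ^ (-β)) * (1/2) := by
        rw [hrpow]; ring
    _ ≤ (ℙ A).toReal * (ℙ B).toReal :=
        mul_le_mul hPA hPB (by norm_num) ENNReal.toReal_nonneg
    _ = (ℙ (A ∩ B)).toReal := hABval.symm
    _ ≤ _ := hfin
end
end

section
/- For every q < 0 and every T > 0 there exists a constant A > 0 such that V_q(x,t) ≤ A (x + T√t)^q for all t > 0 and all x > −T√t. -/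
open MeasureTheory ProbabilityTheory Real Set Filter
open scoped ENNReal NNReal ProbabilityTheory

noncomputable section

variable {Ω : Type*}

/-- Lemma 3: for `q < 0`, `V_q(x,t) ≤ A (x + T√t)^q` on `x > -T√t`. -/
theorem V_negative_index_bound (q T : ℝ) (hq : q < 0) (hT : 0 < T) :
    ∃ A : ℝ, 0 < A ∧ ∀ t : ℝ, 0 < t → ∀ x : ℝ, -T * Real.sqrt t < x →
      V q x t ≤ A * (x + T * Real.sqrt t) ^ q := by
  have hGamma : 0 < Real.Gamma (-q) := Real.Gamma_pos_of_pos (by linarith)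
  -- key pointwise bound on ψ_q
  have hpsi : ∀ y : ℝ, -T < y → psi q y ≤ Real.exp (T ^ 2 / 2) * (y + T) ^ q := by
    intro y hy
    have hb : 0 < y + T := by linarith
    have hpsi_eq : psi q y = (Real.Gamma (-q))⁻¹ *
        ∫ s in Set.Ioi (0 : ℝ), Real.exp (-y * s - s ^ 2 / 2) * s ^ (-q - 1) := by
      have h0 : ⌈q⌉₊ = 0 := Nat.ceil_eq_zero.mpr hq.le
      rw [psi, h0]
      simp [psiAux, hq]
    have hint : IntegrableOn (fun s : ℝ => Real.exp (-((y + T) * s)) * s ^ (-q - 1))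
        (Ioi 0) := by
      have h := integrableOn_rpow_mul_exp_neg_mul_rpow (p := 1) (s := -q - 1) (b := y + T)
        (by linarith) one_pos hb
      refine h.congr_fun (fun x hx => ?_) measurableSet_Ioi
      beta_reduce
      rw [Real.rpow_one, mul_comm, neg_mul]
    have hIval : ∫ s in Ioi (0:ℝ), Real.exp (-((y + T) * s)) * s ^ (-q - 1)
        = (1 / (y + T)) ^ (-q) * Real.Gamma (-q) := by
      rw [← integral_rpow_mul_exp_neg_mul_Ioi (by linarith : (0:ℝ) < -q) hb]
      refine setIntegral_congr_fun measurableSet_Ioi (fun x hx => ?_)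
      ring_nf
    have hmono : ∫ s in Ioi (0:ℝ), Real.exp (-y * s - s ^ 2 / 2) * s ^ (-q - 1)
        ≤ ∫ s in Ioi (0:ℝ), Real.exp (T ^ 2 / 2) *
            (Real.exp (-((y + T) * s)) * s ^ (-q - 1)) := by
      refine integral_mono_of_nonneg ?_ (hint.const_mul _) ?_
      · filter_upwards [self_mem_ae_restrict measurableSet_Ioi] with s hs
        have : (0:ℝ) < s := hs
        positivity
      · filter_upwards [self_mem_ae_restrict measurableSet_Ioi] with s hs
        have hs0 : (0:ℝ) < s := hs
        have h1 : Real.exp (-y * s - s ^ 2 / 2)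
            ≤ Real.exp (T ^ 2 / 2) * Real.exp (-((y + T) * s)) := by
          rw [← Real.exp_add]
          apply Real.exp_le_exp.mpr
          nlinarith [sq_nonneg (s - T)]
        have h2 : (0:ℝ) ≤ s ^ (-q - 1) := by positivity
        calc Real.exp (-y * s - s ^ 2 / 2) * s ^ (-q - 1)
            ≤ (Real.exp (T ^ 2 / 2) * Real.exp (-((y + T) * s))) * s ^ (-q - 1) :=
              mul_le_mul_of_nonneg_right h1 h2
          _ = Real.exp (T ^ 2 / 2) * (Real.exp (-((y + T) * s)) * s ^ (-q - 1)) := by ring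
    rw [hpsi_eq]
    rw [integral_const_mul, hIval] at hmono
    have hfinal : (Real.Gamma (-q))⁻¹ *
        (Real.exp (T ^ 2 / 2) * ((1 / (y + T)) ^ (-q) * Real.Gamma (-q)))
        = Real.exp (T ^ 2 / 2) * (y + T) ^ q := by
      have h1 : (1 / (y + T)) ^ (-q) = (y + T) ^ q := by
        rw [one_div, ← Real.rpow_neg_one, ← Real.rpow_mul hb.le]
        norm_num
      rw [h1]
      field_simp
    calc (Real.Gamma (-q))⁻¹ *
        ∫ s in Set.Ioi (0 : ℝ), Real.exp (-y * s - s ^ 2 / 2) * s ^ (-q - 1)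
        ≤ (Real.Gamma (-q))⁻¹ *
          (Real.exp (T ^ 2 / 2) * ((1 / (y + T)) ^ (-q) * Real.Gamma (-q))) := by
          apply mul_le_mul_of_nonneg_left hmono (by positivity)
      _ = Real.exp (T ^ 2 / 2) * (y + T) ^ q := hfinal
  refine ⟨Real.exp (T ^ 2 / 2), Real.exp_pos _, fun t ht x hx => ?_⟩
  have hst : 0 < Real.sqrt t := Real.sqrt_pos.mpr ht
  set y := x / Real.sqrt t with hy_def
  have hyT : -T < y := by
    rw [hy_def, lt_div_iff₀ hst]
    linarith [hx]
  have hVeq : V q x t = t ^ (q / 2) * psi q y := by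
    rw [V, if_neg ht.ne']
  have hxsplit : x + T * Real.sqrt t = Real.sqrt t * (y + T) := by
    rw [hy_def, mul_add, mul_comm (Real.sqrt t) (x / Real.sqrt t), div_mul_cancel₀ x hst.ne']
    ring
  have hrpow : (x + T * Real.sqrt t) ^ q = t ^ (q / 2) * (y + T) ^ q := by
    rw [hxsplit, Real.mul_rpow hst.le (by linarith)]
    congr 1
    rw [Real.sqrt_eq_rpow, ← Real.rpow_mul ht.le]
    congr 1
    ring
  rw [hVeq, hrpow]
  have htq : 0 < t ^ (q / 2) := Real.rpow_pos_of_pos ht _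
  calc t ^ (q / 2) * psi q y ≤ t ^ (q / 2) * (Real.exp (T ^ 2 / 2) * (y + T) ^ q) :=
        mul_le_mul_of_nonneg_left (hpsi y hyT) htq.le
    _ = Real.exp (T ^ 2 / 2) * (t ^ (q / 2) * (y + T) ^ q) := by ring
end
end

section
/- For every p ∈ (0,1) there exists a constant A(p) > 0 such that V_p(x,t) ≤ A(p) (x − c(p)√t)^p for all t > 0 and all x ≥ c(p)√t. -/
open MeasureTheory ProbabilityTheory Real Set Filter
open scoped ENNReal NNReal ProbabilityTheory

noncomputable section

variable {Ω : Type*}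

open Topology

namespace VBoundAux




/-- The basic integral `F x r = ∫_0^∞ e^{-xs - s²/2} s^r ds`. -/
def F (x r : ℝ) : ℝ := ∫ s in Set.Ioi (0 : ℝ), Real.exp (-x * s - s ^ 2 / 2) * s ^ r

lemma integrableOn_phi {r : ℝ} (hr : -1 < r) (x : ℝ) :
    IntegrableOn (fun s : ℝ => Real.exp (-x * s - s ^ 2 / 2) * s ^ r) (Ioi 0) := by
  have h0 : IntegrableOn
      (fun s : ℝ => Real.exp (x ^ 2) * (s ^ r * Real.exp (-(1/4) * s ^ 2))) (Ioi 0) :=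
    (integrableOn_rpow_mul_exp_neg_mul_sq (by norm_num) hr).const_mul _
  refine h0.mono' ?_ ?_
  · refine (ContinuousOn.aestronglyMeasurable ?_ measurableSet_Ioi)
    refine ContinuousOn.mul (Continuous.continuousOn (by continuity)) ?_
    exact fun s hs => (Real.continuousAt_rpow_const s r (Or.inl (ne_of_gt hs))).continuousWithinAt
  · filter_upwards [ae_restrict_mem measurableSet_Ioi] with s hs
    have hs0 : (0:ℝ) < s := hs
    rw [Real.norm_eq_abs, abs_mul, abs_of_pos (Real.exp_pos _),
      abs_of_pos (Real.rpow_pos_of_pos hs0 _)]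
    have h1 : -x * s - s ^ 2 / 2 ≤ x ^ 2 + (-(1/4) * s ^ 2) := by nlinarith [sq_nonneg (x + s/2)]
    calc Real.exp (-x * s - s ^ 2 / 2) * s ^ r
        ≤ Real.exp (x ^ 2 + (-(1/4) * s ^ 2)) * s ^ r := by
          exact mul_le_mul_of_nonneg_right (Real.exp_le_exp.2 h1)
            (Real.rpow_nonneg hs0.le _)
      _ = Real.exp (x ^ 2) * (s ^ r * Real.exp (-(1/4) * s ^ 2)) := by
          rw [Real.exp_add]; ring

lemma F_pos {r : ℝ} (hr : -1 < r) (x : ℝ) : 0 < F x r := by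
  rw [F, setIntegral_pos_iff_support_of_nonneg_ae]
  · have : (Function.support fun s : ℝ => Real.exp (-x * s - s ^ 2 / 2) * s ^ r) ∩ Ioi 0
        = Ioi 0 := by
      rw [inter_eq_right]
      intro s hs
      exact mul_ne_zero (Real.exp_pos _).ne' (Real.rpow_pos_of_pos hs _).ne'
    rw [this, volume_Ioi]
    exact ENNReal.zero_lt_top
  · filter_upwards [ae_restrict_mem measurableSet_Ioi] with s hs
    exact (mul_pos (Real.exp_pos _) (Real.rpow_pos_of_pos hs _)).le
  · exact integrableOn_phi hr x

lemma F_anti {r : ℝ} (hr : -1 < r) {x y : ℝ} (hxy : x ≤ y) : F y r ≤ F x r := by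
  refine setIntegral_mono_on (integrableOn_phi hr y) (integrableOn_phi hr x)
    measurableSet_Ioi fun s hs => ?_
  have hs0 : (0:ℝ) < s := hs
  exact mul_le_mul_of_nonneg_right (Real.exp_le_exp.2 (by nlinarith))
    (Real.rpow_nonneg hs0.le _)

lemma aesm_phi (x r : ℝ) : AEStronglyMeasurable
    (fun s : ℝ => Real.exp (-x * s - s ^ 2 / 2) * s ^ r) (volume.restrict (Ioi 0)) := by
  refine (ContinuousOn.aestronglyMeasurable ?_ measurableSet_Ioi)
  refine ContinuousOn.mul (Continuous.continuousOn (by continuity)) ?_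
  exact fun s hs => (Real.continuousAt_rpow_const s r (Or.inl (ne_of_gt hs))).continuousWithinAt

lemma hasDerivAt_F {r : ℝ} (hr : -1 < r) (x : ℝ) :
    HasDerivAt (fun y => F y r) (-F x (r + 1)) x := by
  have key := hasDerivAt_integral_of_dominated_loc_of_deriv_le
    (μ := volume.restrict (Ioi (0:ℝ)))
    (F := fun y s => Real.exp (-y * s - s ^ 2 / 2) * s ^ r)
    (F' := fun y s => -(Real.exp (-y * s - s ^ 2 / 2) * s ^ (r + 1)))
    (bound := fun s => Real.exp (-(-(|x| + 1)) * s - s ^ 2 / 2) * s ^ (r + 1))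
    (x₀ := x) (s := Metric.ball x 1) (Metric.ball_mem_nhds x one_pos)
    (Eventually.of_forall fun y => aesm_phi y r)
    (integrableOn_phi hr x)
    ((aesm_phi x (r + 1)).neg)
    ?_ (integrableOn_phi (by linarith) (-(|x| + 1))) ?_
  · have h2 := key.2
    rw [integral_neg] at h2
    exact h2
  · filter_upwards [ae_restrict_mem measurableSet_Ioi] with s hs y hy
    have hs0 : (0:ℝ) < s := hs
    rw [norm_neg, Real.norm_eq_abs, abs_mul, abs_of_pos (Real.exp_pos _),
      abs_of_pos (Real.rpow_pos_of_pos hs0 _)]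
    have hyx : |y| ≤ |x| + 1 := by
      have := abs_sub_abs_le_abs_sub y x
      have h2 : |y - x| < 1 := by simpa [Real.dist_eq] using hy
      linarith
    have : -y * s - s ^ 2 / 2 ≤ -(-(|x| + 1)) * s - s ^ 2 / 2 := by
      have : -y ≤ |x| + 1 := by
        have := neg_abs_le y
        linarith
      nlinarith
    exact mul_le_mul_of_nonneg_right (Real.exp_le_exp.2 this) (Real.rpow_nonneg hs0.le _)
  · filter_upwards [ae_restrict_mem measurableSet_Ioi] with s hs y hy
    have hs0 : (0:ℝ) < s := hs
    have h1 : HasDerivAt (fun y : ℝ => -y * s - s ^ 2 / 2) (-1 * s) y := by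
      simpa using (((hasDerivAt_id y).neg.mul_const s).sub_const (s ^ 2 / 2))
    have h2 : HasDerivAt (fun y : ℝ => Real.exp (-y * s - s ^ 2 / 2) * s ^ r)
        (Real.exp (-y * s - s ^ 2 / 2) * (-1 * s) * s ^ r) y := (h1.exp).mul_const (s ^ r)
    refine h2.congr_deriv ?_
    rw [Real.rpow_add hs0, Real.rpow_one]
    ring

lemma tendsto_phi_atTop (x r : ℝ) :
    Tendsto (fun s : ℝ => Real.exp (-x * s - s ^ 2 / 2) * s ^ r) atTop (𝓝 0) := by
  have h := tendsto_rpow_mul_exp_neg_mul_atTop_nhds_zero r 1 one_pos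
  refine squeeze_zero' ?_ ?_ h
  · filter_upwards [eventually_gt_atTop 0] with s hs
    positivity
  · filter_upwards [eventually_ge_atTop (2 * (1 - x)), eventually_gt_atTop 0] with s h1 h2
    rw [mul_comm (s ^ r)]
    refine mul_le_mul_of_nonneg_right (Real.exp_le_exp.2 ?_) (Real.rpow_nonneg h2.le _)
    nlinarith

lemma F_parts {r : ℝ} (hr : 0 < r) (x : ℝ) : x * F x r + F x (r + 1) = r * F x (r - 1) := by
  set e : ℝ → ℝ := fun s => Real.exp (-x * s - s ^ 2 / 2) with he
  set H : ℝ → ℝ := fun s => -(e s * s ^ r) with hH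
  have hderiv : ∀ s ∈ Ioi (0:ℝ), HasDerivAt H
      (x * (e s * s ^ r) + e s * s ^ (r + 1) - r * (e s * s ^ (r - 1))) s := by
    intro s hs
    have hs0 : (0:ℝ) < s := hs
    have h1 : HasDerivAt (fun s : ℝ => -x * s - s ^ 2 / 2) (-x - s) s := by
      have := ((hasDerivAt_id s).const_mul (-x)).sub ((hasDerivAt_pow 2 s).div_const 2)
      exact this.congr_deriv (by ring)
    have h2 : HasDerivAt e ((-x - s) * e s) s := by
      simpa [he, mul_comm] using h1.exp
    have h3 : HasDerivAt (fun s : ℝ => s ^ r) (r * s ^ (r - 1)) s :=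
      Real.hasDerivAt_rpow_const (Or.inl hs0.ne')
    have h4 : HasDerivAt H (-((-x - s) * e s * s ^ r + e s * (r * s ^ (r - 1)))) s := (h2.mul h3).neg
    convert h4 using 1
    rw [Real.rpow_add hs0, Real.rpow_one]
    have hsub : s ^ (r - 1) * s = s ^ r := by
      rw [← Real.rpow_add_one hs0.ne' (r - 1)]
      congr 1
      ring
    nlinarith [hsub]
  have hcont : ContinuousWithinAt H (Ici 0) 0 := by
    have : ContinuousAt H 0 := by
      refine ContinuousAt.neg (ContinuousAt.mul ?_ ?_)
      · exact Continuous.continuousAt (by continuity)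
      · exact Real.continuousAt_rpow_const 0 r (Or.inr hr.le)
    exact this.continuousWithinAt
  have htop : Tendsto H atTop (𝓝 0) := by
    have h := (tendsto_phi_atTop x r).neg
    rw [neg_zero] at h
    exact h
  have int1 : IntegrableOn (fun s : ℝ => e s * s ^ r) (Ioi 0) := integrableOn_phi (by linarith) x
  have int2 : IntegrableOn (fun s : ℝ => e s * s ^ (r + 1)) (Ioi 0) :=
    integrableOn_phi (by linarith) x
  have int3 : IntegrableOn (fun s : ℝ => e s * s ^ (r - 1)) (Ioi 0) :=
    integrableOn_phi (by linarith) x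
  have hint : IntegrableOn
      (fun s : ℝ => x * (e s * s ^ r) + e s * s ^ (r + 1) - r * (e s * s ^ (r - 1)))
      (Ioi 0) := ((int1.const_mul x).add int2).sub (int3.const_mul r)
  have h0 := integral_Ioi_of_hasDerivAt_of_tendsto hcont hderiv hint htop
  have hH0 : H 0 = 0 := by
    simp [hH, he, Real.zero_rpow hr.ne']
  rw [hH0, sub_zero] at h0
  have intA : IntegrableOn (fun s : ℝ => x * (e s * s ^ r) + e s * s ^ (r + 1)) (Ioi 0) :=
    (int1.const_mul x).add int2
  have intB : IntegrableOn (fun s : ℝ => r * (e s * s ^ (r - 1))) (Ioi 0) :=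
    int3.const_mul r
  rw [integral_sub intA intB, integral_add (int1.const_mul x) int2,
    integral_const_mul, integral_const_mul] at h0
  have hF1 : F x r = ∫ s in Ioi (0:ℝ), e s * s ^ r := rfl
  have hF2 : F x (r + 1) = ∫ s in Ioi (0:ℝ), e s * s ^ (r + 1) := rfl
  have hF3 : F x (r - 1) = ∫ s in Ioi (0:ℝ), e s * s ^ (r - 1) := rfl
  rw [hF1, hF2, hF3]
  linarith
lemma F_le {y r : ℝ} (hy : 0 < y) (hr : -1 < r) :
    F y r ≤ (1 / y) ^ (r + 1) * Real.Gamma (r + 1) := by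
  have hint : IntegrableOn (fun s : ℝ => s ^ r * Real.exp (-(y * s))) (Ioi 0) := by
    have h := integrableOn_rpow_mul_exp_neg_mul_rpow hr one_pos hy
    simpa [Real.rpow_one] using h
  have h1 : F y r ≤ ∫ s in Ioi (0:ℝ), s ^ r * Real.exp (-(y * s)) := by
    refine setIntegral_mono_on (integrableOn_phi hr y) hint measurableSet_Ioi fun s hs => ?_
    have hs0 : (0:ℝ) < s := hs
    rw [mul_comm (s ^ r)]
    refine mul_le_mul_of_nonneg_right (Real.exp_le_exp.2 (by nlinarith)) (Real.rpow_nonneg hs0.le _)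
  have h2 : ∫ s in Ioi (0:ℝ), s ^ r * Real.exp (-(y * s))
      = (1 / y) ^ (r + 1) * Real.Gamma (r + 1) := by
    have h := integral_rpow_mul_exp_neg_mul_Ioi (show (0:ℝ) < r + 1 by linarith) hy
    simpa only [show r + 1 - 1 = r from by ring] using h
  linarith [h1, h2.le, h2.ge]

variable {p : ℝ}

lemma psi_eq (hp0 : 0 < p) (hp1 : p < 1) (x : ℝ) :
    psi p x = (Real.Gamma (1 - p))⁻¹ * (x * F x (-p) + F x (1 - p)) := by
  have hceil : ⌈p⌉₊ = 1 := by
    rw [Nat.ceil_eq_iff one_ne_zero]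
    constructor
    · simpa using hp0
    · exact_mod_cast hp1.le
  rw [psi, hceil]
  show psiAux 2 p x = _
  have e1 : -(p - 1) - 1 = -p := by ring
  have e2 : -(p - 1) = 1 - p := by ring
  have e3 : -(p - 2) - 1 = 1 - p := by ring
  have e4 : -(p - 2) = 2 - p := by ring
  simp only [psiAux, if_neg (not_lt.mpr hp0.le), if_pos (show p - 1 < 0 by linarith),
    if_pos (show p - 2 < 0 by linarith), e1, e2, e3, e4,
    show (1:ℝ) - p - 1 = -p from by ring, show (2:ℝ) - p - 1 = 1 - p from by ring]
  have hF1 : (∫ s in Ioi (0:ℝ), Real.exp (-x * s - s ^ 2 / 2) * s ^ (-p)) = F x (-p) := rfl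
  have hF2 : (∫ s in Ioi (0:ℝ), Real.exp (-x * s - s ^ 2 / 2) * s ^ (1 - p)) = F x (1 - p) := rfl
  rw [hF1, hF2]
  have h1p : (0:ℝ) < 1 - p := by linarith
  have hΓ : Real.Gamma (2 - p) = (1 - p) * Real.Gamma (1 - p) := by
    rw [show (2:ℝ) - p = (1 - p) + 1 by ring, Real.Gamma_add_one h1p.ne']
  have hΓpos : 0 < Real.Gamma (1 - p) := Real.Gamma_pos_of_pos h1p
  rw [hΓ]
  field_simp

lemma hasDerivAt_psi (hp0 : 0 < p) (hp1 : p < 1) (x : ℝ) :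
    HasDerivAt (fun y => psi p y)
      ((Real.Gamma (1 - p))⁻¹ * (p * F x (-p))) x := by
  have hd1 : HasDerivAt (fun y => F y (-p)) (-F x (-p + 1)) x := hasDerivAt_F (by linarith) x
  have hd2 : HasDerivAt (fun y => F y (1 - p)) (-F x (1 - p + 1)) x := hasDerivAt_F (by linarith) x
  have hg : HasDerivAt (fun y => y * F y (-p) + F y (1 - p))
      (1 * F x (-p) + x * -F x (-p + 1) + -F x (1 - p + 1)) x :=
    ((hasDerivAt_id x).mul hd1).add hd2
  have e5 : -p + 1 = 1 - p := by ring
  have e6 : 1 - p + 1 = 2 - p := by ring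
  rw [e5, e6] at hg
  have hparts := F_parts (show (0:ℝ) < 1 - p by linarith) x
  rw [show (1:ℝ) - p + 1 = 2 - p from by ring, show (1:ℝ) - p - 1 = -p from by ring] at hparts
  have hd : (1:ℝ) * F x (-p) + x * -F x (1 - p) + -F x (2 - p) = p * F x (-p) := by linarith
  rw [hd] at hg
  have hfun : (fun y => psi p y)
      = fun y => (Real.Gamma (1 - p))⁻¹ * (y * F y (-p) + F y (1 - p)) :=
    funext fun y => psi_eq hp0 hp1 y
  rw [hfun]
  exact hg.const_mul _

lemma psi_cont (hp0 : 0 < p) (hp1 : p < 1) : Continuous (fun y => psi p y) :=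
  continuous_iff_continuousAt.mpr fun x => (hasDerivAt_psi hp0 hp1 x).continuousAt

lemma psi_pos_of_nonneg (hp0 : 0 < p) (hp1 : p < 1) {y : ℝ} (hy : 0 ≤ y) : 0 < psi p y := by
  rw [psi_eq hp0 hp1]
  have h1p : (0:ℝ) < 1 - p := by linarith
  have h1 := F_pos (show (-1:ℝ) < -p by linarith) y
  have h2 := F_pos (show (-1:ℝ) < 1 - p by linarith) y
  have h3 : 0 < (Real.Gamma (1 - p))⁻¹ := inv_pos.mpr (Real.Gamma_pos_of_pos h1p)
  have h4 : 0 ≤ y * F y (-p) := mul_nonneg hy h1.le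
  nlinarith

lemma cRoot_spec (hp0 : 0 < p) (hp1 : p < 1) : psi p (cRoot p) = 0 ∧ cRoot p ≤ 0 := by
  have hcont := psi_cont hp0 hp1
  set D0 : ℝ := (Real.Gamma (1 - p))⁻¹ * (p * F 0 (-p)) with hD0def
  have hD0 : 0 < D0 :=
    mul_pos (inv_pos.mpr (Real.Gamma_pos_of_pos (by linarith)))
      (mul_pos hp0 (F_pos (by linarith) 0))
  have hpsi0 : 0 < psi p 0 := psi_pos_of_nonneg hp0 hp1 le_rfl
  -- tangent-line bound on `Iic 0` coming from concavity of `psi p`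
  have hmono : MonotoneOn (fun y => psi p y - D0 * y) (Iic 0) := by
    apply monotoneOn_of_deriv_nonneg (convex_Iic 0)
    · exact (hcont.sub (continuous_const.mul continuous_id)).continuousOn
    · intro y _
      exact ((hasDerivAt_psi hp0 hp1 y).sub
        ((hasDerivAt_id y).const_mul D0)).differentiableAt.differentiableWithinAt
    · intro y hy
      rw [interior_Iic] at hy
      have hd : HasDerivAt (fun y => psi p y - D0 * y)
          ((Real.Gamma (1 - p))⁻¹ * (p * F y (-p)) - D0 * 1) y :=
        (hasDerivAt_psi hp0 hp1 y).sub ((hasDerivAt_id y).const_mul D0)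
      rw [hd.deriv]
      have hF := F_anti (show (-1:ℝ) < -p by linarith) (le_of_lt hy : y ≤ (0:ℝ))
      have hΓ : 0 < (Real.Gamma (1 - p))⁻¹ := inv_pos.mpr (Real.Gamma_pos_of_pos (by linarith))
      rw [hD0def]
      nlinarith [mul_nonneg (mul_nonneg hΓ.le hp0.le) (sub_nonneg.mpr hF)]
  set x₀ : ℝ := -(psi p 0 + 1) / D0 with hx₀def
  have hx₀ : x₀ ≤ 0 := div_nonpos_of_nonpos_of_nonneg (by linarith) hD0.le
  have hD0x₀ : D0 * x₀ = -(psi p 0 + 1) := by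
    rw [hx₀def]
    field_simp
  have htan : psi p x₀ - D0 * x₀ ≤ psi p 0 - D0 * 0 :=
    hmono (mem_Iic.mpr hx₀) (mem_Iic.mpr le_rfl) hx₀
  have hx₀neg : psi p x₀ ≤ -1 := by
    rw [hD0x₀] at htan
    linarith
  obtain ⟨z, hzmem, hz⟩ : ∃ z ∈ Icc x₀ 0, psi p z = 0 := by
    have hsub := intermediate_value_Icc hx₀ hcont.continuousOn
    have h0mem : (0:ℝ) ∈ Icc (psi p x₀) (psi p 0) := ⟨by linarith, hpsi0.le⟩
    obtain ⟨z, hzmem, hz⟩ := hsub h0mem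
    exact ⟨z, hzmem, hz⟩
  have hZne : {x : ℝ | psi p x = 0}.Nonempty := ⟨z, hz⟩
  have hZub : ∀ w ∈ {x : ℝ | psi p x = 0}, w ≤ 0 := by
    intro w hw
    by_contra hcon
    push_neg at hcon
    exact (psi_pos_of_nonneg hp0 hp1 hcon.le).ne' hw
  have hZbdd : BddAbove {x : ℝ | psi p x = 0} := ⟨0, hZub⟩
  have hZclosed : IsClosed {x : ℝ | psi p x = 0} := isClosed_eq hcont continuous_const
  constructor
  · exact hZclosed.csSup_mem hZne hZbdd
  · exact csSup_le hZne hZub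

lemma psi_le_bound (hp0 : 0 < p) (hp1 : p < 1) :
    ∃ A : ℝ, 0 < A ∧ ∀ y : ℝ, cRoot p ≤ y → psi p y ≤ A * (y - cRoot p) ^ p := by
  obtain ⟨hczero, hcle⟩ := cRoot_spec hp0 hp1
  set c := cRoot p with hcdef
  set Γi : ℝ := (Real.Gamma (1 - p))⁻¹ with hΓidef
  have hΓipos : 0 < Γi := inv_pos.mpr (Real.Gamma_pos_of_pos (by linarith))
  set M : ℝ := Γi * (p * F c (-p)) with hMdef
  have hMpos : 0 < M := mul_pos hΓipos (mul_pos hp0 (F_pos (by linarith) c))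
  -- linear bound `psi p y ≤ M (y - c)` via monotonicity of the derivative
  have hlin : ∀ y, c ≤ y → psi p y ≤ M * (y - c) := by
    intro y hy
    have hmono : MonotoneOn (fun u => M * (u - c) - psi p u) (Ici c) := by
      apply monotoneOn_of_deriv_nonneg (convex_Ici c)
      · exact ((continuous_const.mul (continuous_id.sub continuous_const)).sub
          (psi_cont hp0 hp1)).continuousOn
      · intro u _
        exact ((((hasDerivAt_id u).sub_const c).const_mul M).sub
          (hasDerivAt_psi hp0 hp1 u)).differentiableAt.differentiableWithinAt
      · intro u hu
        rw [interior_Ici] at hu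
        have hd : HasDerivAt (fun u => M * (u - c) - psi p u)
            (M * 1 - (Real.Gamma (1 - p))⁻¹ * (p * F u (-p))) u :=
          (((hasDerivAt_id u).sub_const c).const_mul M).sub (hasDerivAt_psi hp0 hp1 u)
        rw [hd.deriv]
        have hF := F_anti (show (-1:ℝ) < -p by linarith) (le_of_lt hu : c ≤ u)
        rw [hMdef]
        nlinarith [mul_nonneg (mul_nonneg hΓipos.le hp0.le) (sub_nonneg.mpr hF)]
    have h := hmono (self_mem_Ici) (mem_Ici.mpr hy) hy
    simp only [sub_self, mul_zero, hczero, sub_zero, zero_sub, neg_zero] at h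
    linarith
  -- sublinear bound for `y ≥ 1`
  have hbig : ∀ y : ℝ, 1 ≤ y → psi p y ≤ 2 * y ^ p := by
    intro y hy1
    have hy0 : (0:ℝ) < y := lt_of_lt_of_le one_pos hy1
    have hA := F_le hy0 (show (-1:ℝ) < -p by linarith)
    have hB := F_le hy0 (show (-1:ℝ) < 1 - p by linarith)
    rw [show -p + 1 = 1 - p from by ring] at hA
    rw [show (1:ℝ) - p + 1 = 2 - p from by ring] at hB
    have h1 : (1/y) ^ (1 - p) = y ^ (p - 1) := by
      rw [one_div, Real.inv_rpow hy0.le, ← Real.rpow_neg hy0.le]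
      congr 1; ring
    have h1' : (1/y) ^ (2 - p) = y ^ (p - 2) := by
      rw [one_div, Real.inv_rpow hy0.le, ← Real.rpow_neg hy0.le]
      congr 1; ring
    have h2 : y * y ^ (p - 1) = y ^ p := by
      have h := (Real.rpow_add hy0 1 (p - 1)).symm
      rw [Real.rpow_one] at h
      rw [h, show (1:ℝ) + (p - 1) = p from by ring]
    have h3 : y ^ (p - 2) ≤ y ^ p := Real.rpow_le_rpow_of_exponent_le hy1 (by linarith)
    have hΓ : Real.Gamma (2 - p) = (1 - p) * Real.Gamma (1 - p) := by
      rw [show (2:ℝ) - p = (1 - p) + 1 from by ring,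
        Real.Gamma_add_one (show (1:ℝ) - p ≠ 0 from by linarith)]
    have hΓne : Real.Gamma (1 - p) ≠ 0 := (Real.Gamma_pos_of_pos (by linarith)).ne'
    have hF1 := F_pos (show (-1:ℝ) < -p by linarith) y
    have hF2 := F_pos (show (-1:ℝ) < 1 - p by linarith) y
    calc psi p y = Γi * (y * F y (-p) + F y (1 - p)) := psi_eq hp0 hp1 y
      _ ≤ Γi * (y * ((1/y) ^ (1 - p) * Real.Gamma (1 - p))
            + (1/y) ^ (2 - p) * Real.Gamma (2 - p)) := by
          refine mul_le_mul_of_nonneg_left ?_ hΓipos.le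
          exact add_le_add (mul_le_mul_of_nonneg_left hA hy0.le) hB
      _ = y * y ^ (p - 1) + (1 - p) * y ^ (p - 2) := by
          rw [h1, h1', hΓ, hΓidef]
          field_simp
      _ = y ^ p + (1 - p) * y ^ (p - 2) := by rw [h2]
      _ ≤ 2 * y ^ p := by
          have h4 : 0 ≤ y ^ (p - 2) := Real.rpow_nonneg hy0.le _
          nlinarith
  -- combine
  refine ⟨M * (1 - c) ^ (1 - p) + 2, ?_, ?_⟩
  · have : (0:ℝ) < (1 - c) ^ (1 - p) := Real.rpow_pos_of_pos (by linarith) _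
    nlinarith
  intro y hy
  have hyc : 0 ≤ y - c := sub_nonneg.mpr hy
  have hpow_nonneg : 0 ≤ (y - c) ^ p := Real.rpow_nonneg hyc _
  have hfac : 0 ≤ M * (1 - c) ^ (1 - p) :=
    mul_nonneg hMpos.le (Real.rpow_nonneg (by linarith) _)
  rcases le_or_gt y 1 with hy1 | hy1
  · -- use the linear bound
    have hkey : y - c ≤ (1 - c) ^ (1 - p) * (y - c) ^ p := by
      rcases eq_or_lt_of_le hyc with h | h
      · rw [← h]
        simp [Real.zero_rpow hp0.ne']
      · have hsplit : y - c = (y - c) ^ (1 - p) * (y - c) ^ p := by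
          rw [← Real.rpow_add h, show (1:ℝ) - p + p = 1 from by ring, Real.rpow_one]
        calc y - c = (y - c) ^ (1 - p) * (y - c) ^ p := hsplit
          _ ≤ (1 - c) ^ (1 - p) * (y - c) ^ p :=
            mul_le_mul_of_nonneg_right
              (Real.rpow_le_rpow hyc (by linarith) (by linarith)) hpow_nonneg
    have := hlin y hy
    have h5 : M * (y - c) ≤ M * ((1 - c) ^ (1 - p) * (y - c) ^ p) :=
      mul_le_mul_of_nonneg_left hkey hMpos.le
    nlinarith
  · -- use the sublinear bound
    have h6 : psi p y ≤ 2 * y ^ p := hbig y hy1.le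
    have h7 : y ^ p ≤ (y - c) ^ p :=
      Real.rpow_le_rpow (by linarith) (by linarith) hp0.le
    nlinarith

end VBoundAux

/-- Lemma 4: for `p ∈ (0,1)`, `V_p(x,t) ≤ A(p) (x - c(p)√t)^p` on `x ≥ c(p)√t`. -/
theorem V_bound_p_in_01 (p : ℝ) (hp0 : 0 < p) (hp1 : p < 1) :
    ∃ A : ℝ, 0 < A ∧ ∀ t : ℝ, 0 < t → ∀ x : ℝ, cRoot p * Real.sqrt t ≤ x →
      V p x t ≤ A * (x - cRoot p * Real.sqrt t) ^ p := by
  obtain ⟨A, hApos, hbound⟩ := VBoundAux.psi_le_bound hp0 hp1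
  refine ⟨A, hApos, ?_⟩
  intro t ht x hx
  rw [V, if_neg ht.ne']
  have hst : 0 < Real.sqrt t := Real.sqrt_pos.mpr ht
  set c := cRoot p with hc
  have hy : c ≤ x / Real.sqrt t := (le_div_iff₀ hst).mpr hx
  have hb := hbound _ hy
  have htp : t ^ (p / 2) = Real.sqrt t ^ p := by
    rw [Real.sqrt_eq_rpow, ← Real.rpow_mul ht.le]
    congr 1
    ring
  have hmul : Real.sqrt t ^ p * (x / Real.sqrt t - c) ^ p = (x - c * Real.sqrt t) ^ p := by
    rw [← Real.mul_rpow (Real.sqrt_nonneg t) (sub_nonneg.mpr hy)]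
    congr 1
    field_simp
  calc t ^ (p / 2) * psi p (x / Real.sqrt t)
      ≤ t ^ (p / 2) * (A * (x / Real.sqrt t - c) ^ p) :=
        mul_le_mul_of_nonneg_left hb (Real.rpow_nonneg ht.le _)
    _ = A * (x - c * Real.sqrt t) ^ p := by rw [htp, ← hmul]; ring
end
end
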